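/- Let Θ be an ε-embedding for range(W) with ε < 1, and let R be invertible with ‖ΘWR^{-1} − S‖_F ≤ F₁ and ‖I − SᵀS‖_F ≤ Δ. Then (1+ε)^{-1/2}(1 − Δ − F₁) ≤ σ_min(WR^{-1}) ≤ σ_max(WR^{-1}) ≤ (1−ε)^{-1/2}(1 + Δ + F₁). -/

import Mathlib

open Matrix

/-- Euclidean (ℓ₂) norm of a vector. -/
noncomputable def vecNorm2 {n : ℕ} (v : Fin n → ℝ) : ℝ := Real.sqrt (v ⬝ᵥ v)

/-- Smallest singular value: infimum of ‖A x‖ over unit vectors x. -/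
noncomputable def smin {k m : ℕ} (A : Matrix (Fin k) (Fin m) ℝ) : ℝ :=
  sInf ((fun x => vecNorm2 (A.mulVec x)) '' {x | vecNorm2 x = 1})

/-- Largest singular value (spectral norm): supremum of ‖A x‖ over unit vectors x. -/
noncomputable def smax {k m : ℕ} (A : Matrix (Fin k) (Fin m) ℝ) : ℝ :=
  sSup ((fun x => vecNorm2 (A.mulVec x)) '' {x | vecNorm2 x = 1})

/-- Frobenius norm. -/
noncomputable def frob {k m : ℕ} (A : Matrix (Fin k) (Fin m) ℝ) : ℝ :=
  Real.sqrt (∑ i, ∑ j, (A i j) ^ 2)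

section AuxLemmas
open Finset
variable {n k m : ℕ}

lemma dot_self_nonneg' (v : Fin n → ℝ) : 0 ≤ v ⬝ᵥ v :=
  Finset.sum_nonneg fun i _ => mul_self_nonneg (v i)

lemma enorm_nonneg' (v : Fin n → ℝ) : 0 ≤ vecNorm2 v := Real.sqrt_nonneg _

lemma sq_enorm (v : Fin n → ℝ) : vecNorm2 v ^ 2 = v ⬝ᵥ v :=
  Real.sq_sqrt (dot_self_nonneg' v)

lemma frob_nonneg (A : Matrix (Fin k) (Fin m) ℝ) : 0 ≤ frob A := Real.sqrt_nonneg _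

lemma sq_frob (A : Matrix (Fin k) (Fin m) ℝ) : frob A ^ 2 = ∑ i, ∑ j, (A i j) ^ 2 :=
  Real.sq_sqrt (Finset.sum_nonneg fun _ _ => Finset.sum_nonneg fun _ _ => sq_nonneg _)

lemma le_of_sq_le_sq'' {a b : ℝ} (h : a ^ 2 ≤ b ^ 2) (hb : 0 ≤ b) : a ≤ b :=
  (abs_le_of_sq_le_sq' h hb).2

lemma enorm_cauchy (a b : Fin n → ℝ) : |a ⬝ᵥ b| ≤ vecNorm2 a * vecNorm2 b := by
  have h := Finset.sum_mul_sq_le_sq_mul_sq Finset.univ a b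
  have hsq : (a ⬝ᵥ b) ^ 2 ≤ (vecNorm2 a * vecNorm2 b) ^ 2 := by
    rw [mul_pow, sq_enorm, sq_enorm]
    simpa [dotProduct, pow_two, mul_sum, sum_mul] using h
  exact abs_le.mpr (abs_le_of_sq_le_sq' hsq (mul_nonneg (enorm_nonneg' a) (enorm_nonneg' b)))

lemma vecNorm2_add_le (a b : Fin n → ℝ) : vecNorm2 (a + b) ≤ vecNorm2 a + vecNorm2 b := by
  apply le_of_sq_le_sq'' _ (add_nonneg (enorm_nonneg' a) (enorm_nonneg' b))
  have hc := (abs_le.mp (enorm_cauchy a b)).2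
  have hab : (a + b) ⬝ᵥ (a + b) = a ⬝ᵥ a + 2 * (a ⬝ᵥ b) + b ⬝ᵥ b := by
    simp [add_dotProduct, dotProduct_add, dotProduct_comm b a]; ring
  rw [sq_enorm, hab]
  have h1 := sq_enorm a; have h2 := sq_enorm b
  nlinarith [enorm_nonneg' a, enorm_nonneg' b]

lemma vecNorm2_neg (a : Fin n → ℝ) : vecNorm2 (-a) = vecNorm2 a := by
  unfold vecNorm2; rw [neg_dotProduct, dotProduct_neg, neg_neg]

lemma enorm_mulVec_le (A : Matrix (Fin k) (Fin m) ℝ) (x : Fin m → ℝ) :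
    vecNorm2 (A.mulVec x) ≤ frob A * vecNorm2 x := by
  apply le_of_sq_le_sq'' _ (mul_nonneg (frob_nonneg A) (enorm_nonneg' x))
  rw [mul_pow, sq_enorm, sq_enorm, sq_frob, Finset.sum_mul]
  apply Finset.sum_le_sum
  intro i _
  have h := Finset.sum_mul_sq_le_sq_mul_sq Finset.univ (A i) x
  simpa [Matrix.mulVec, dotProduct, pow_two] using h

end AuxLemmas

section Pointwise
open Matrix

/-- Bounds for `‖S x‖` from near-orthonormality of `S`. -/
lemma Sx_bounds {k m : ℕ} (S : Matrix (Fin k) (Fin m) ℝ) (Δ : ℝ)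
    (hΔ : frob (1 - Sᵀ * S) ≤ Δ) (x : Fin m → ℝ) (hx : vecNorm2 x = 1) :
    1 - Δ ≤ vecNorm2 (S.mulVec x) ∧ vecNorm2 (S.mulVec x) ≤ 1 + Δ := by
  have hΔ0 : 0 ≤ Δ := le_trans (frob_nonneg _) hΔ
  have hq0 : 0 ≤ vecNorm2 (S.mulVec x) := enorm_nonneg' _
  have hx2 : x ⬝ᵥ x = 1 := by
    have h := sq_enorm x; rw [hx] at h; simpa using h.symm
  have hqsq : vecNorm2 (S.mulVec x) ^ 2 = 1 - x ⬝ᵥ ((1 - Sᵀ * S).mulVec x) := by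
    have hid : x ⬝ᵥ ((Sᵀ * S).mulVec x) = (S.mulVec x) ⬝ᵥ (S.mulVec x) := by
      rw [← Matrix.mulVec_mulVec, Matrix.dotProduct_mulVec, Matrix.vecMul_transpose]
    rw [sq_enorm, Matrix.sub_mulVec, dotProduct_sub, Matrix.one_mulVec, hx2, hid]
    ring
  have hquad : |x ⬝ᵥ ((1 - Sᵀ * S).mulVec x)| ≤ Δ := by
    have h1 := enorm_cauchy x ((1 - Sᵀ * S).mulVec x)
    have h2 := enorm_mulVec_le (1 - Sᵀ * S) x
    rw [hx, mul_one] at h2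
    rw [hx, one_mul] at h1
    exact le_trans h1 (le_trans h2 hΔ)
  obtain ⟨h1, h2⟩ := abs_le.mp hquad
  constructor
  · rcases le_or_gt (1 - Δ) 0 with h | h
    · linarith
    · exact le_of_sq_le_sq'' (by rw [hqsq]; nlinarith) hq0
  · exact le_of_sq_le_sq'' (by rw [hqsq]; nlinarith) (by linarith)

/-- Bounds for `‖M x‖` when `M` is Frobenius-close to a near-orthonormal `S`. -/
lemma Mx_bounds {k m : ℕ} (M S : Matrix (Fin k) (Fin m) ℝ) (Δ F₁ : ℝ)
    (hΔ : frob (1 - Sᵀ * S) ≤ Δ) (hF : frob (M - S) ≤ F₁)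
    (x : Fin m → ℝ) (hx : vecNorm2 x = 1) :
    1 - Δ - F₁ ≤ vecNorm2 (M.mulVec x) ∧ vecNorm2 (M.mulVec x) ≤ 1 + Δ + F₁ := by
  obtain ⟨hlo, hhi⟩ := Sx_bounds S Δ hΔ x hx
  have hEx : vecNorm2 ((M - S).mulVec x) ≤ F₁ := by
    have h2 := enorm_mulVec_le (M - S) x
    rw [hx, mul_one] at h2
    exact le_trans h2 hF
  have hdec : M.mulVec x = S.mulVec x + (M - S).mulVec x := by
    rw [Matrix.sub_mulVec]; abel
  constructor
  · have h2 : S.mulVec x = M.mulVec x + -((M - S).mulVec x) := by rw [hdec]; abel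
    have h3 := vecNorm2_add_le (M.mulVec x) (-((M - S).mulVec x))
    rw [← h2, vecNorm2_neg] at h3
    linarith
  · have h3 := vecNorm2_add_le (S.mulVec x) ((M - S).mulVec x)
    rw [← hdec] at h3
    linarith

/-- Scalar step: transfer bounds on the sketched norm `s` to the original norm `t`. -/
lemma scalar_transfer {ε t s lo hi : ℝ} (hε : ε < 1) (ht0 : 0 ≤ t) (hs0 : 0 ≤ s)
    (hhi0 : 0 ≤ hi) (hlo : lo ≤ s) (hhi : s ≤ hi) (hemb : |t * t - s * s| ≤ ε * t * t) :
    (Real.sqrt (1 + ε))⁻¹ * lo ≤ t ∧ t ≤ (Real.sqrt (1 - ε))⁻¹ * hi := by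
  obtain ⟨he1, he2⟩ := abs_le.mp hemb
  constructor
  · rcases le_or_gt lo 0 with hc | hc
    · exact le_trans (mul_nonpos_of_nonneg_of_nonpos (inv_nonneg.mpr (Real.sqrt_nonneg _)) hc) ht0
    · have hs_pos : 0 < s := lt_of_lt_of_le hc hlo
      have h1ε : 0 < 1 + ε := by nlinarith
      have hb : 0 < Real.sqrt (1 + ε) := Real.sqrt_pos.mpr h1ε
      have hbt : lo ≤ Real.sqrt (1 + ε) * t := by
        apply le_of_sq_le_sq'' _ (mul_nonneg hb.le ht0)
        rw [mul_pow, Real.sq_sqrt h1ε.le]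
        nlinarith
      calc (Real.sqrt (1 + ε))⁻¹ * lo ≤ (Real.sqrt (1 + ε))⁻¹ * (Real.sqrt (1 + ε) * t) :=
            mul_le_mul_of_nonneg_left hbt (inv_nonneg.mpr hb.le)
      _ = t := by field_simp
  · have h1ε : 0 < 1 - ε := by linarith
    have hb : 0 < Real.sqrt (1 - ε) := Real.sqrt_pos.mpr h1ε
    have hbt : Real.sqrt (1 - ε) * t ≤ hi := by
      apply le_of_sq_le_sq'' _ hhi0
      rw [mul_pow, Real.sq_sqrt h1ε.le]
      nlinarith
    calc t = (Real.sqrt (1 - ε))⁻¹ * (Real.sqrt (1 - ε) * t) := by field_simp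
    _ ≤ (Real.sqrt (1 - ε))⁻¹ * hi := mul_le_mul_of_nonneg_left hbt (inv_nonneg.mpr hb.le)

/-- Key pointwise bound: for every unit vector `x`, the norm of `(W R⁻¹) x` is
itself bounded above and below. -/
lemma pointwise_bounds {n m k : ℕ}
    (W : Matrix (Fin n) (Fin m) ℝ) (R : Matrix (Fin m) (Fin m) ℝ)
    (Θ : Matrix (Fin k) (Fin n) ℝ) (S : Matrix (Fin k) (Fin m) ℝ)
    (ε F₁ Δ : ℝ) (hε : ε < 1)
    (hemb : ∀ a b : Fin m → ℝ,
      |(W.mulVec a) ⬝ᵥ (W.mulVec b) - (Θ.mulVec (W.mulVec a)) ⬝ᵥ (Θ.mulVec (W.mulVec b))|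
        ≤ ε * vecNorm2 (W.mulVec a) * vecNorm2 (W.mulVec b))
    (hF : frob (Θ * W * R⁻¹ - S) ≤ F₁) (hΔ : frob (1 - Sᵀ * S) ≤ Δ)
    (x : Fin m → ℝ) (hx : vecNorm2 x = 1) :
    (Real.sqrt (1 + ε))⁻¹ * (1 - Δ - F₁) ≤ vecNorm2 ((W * R⁻¹).mulVec x) ∧
      vecNorm2 ((W * R⁻¹).mulVec x) ≤ (Real.sqrt (1 - ε))⁻¹ * (1 + Δ + F₁) := by
  have hΔ0 : 0 ≤ Δ := le_trans (frob_nonneg _) hΔ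
  have hF0 : 0 ≤ F₁ := le_trans (frob_nonneg _) hF
  obtain ⟨hlo, hhi⟩ := Mx_bounds (Θ * W * R⁻¹) S Δ F₁ hΔ hF x hx
  have hWy : W.mulVec (R⁻¹.mulVec x) = (W * R⁻¹).mulVec x := Matrix.mulVec_mulVec _ _ _
  have hΘy : Θ.mulVec ((W * R⁻¹).mulVec x) = (Θ * W * R⁻¹).mulVec x := by
    rw [Matrix.mulVec_mulVec, ← Matrix.mul_assoc]
  have hembx := hemb (R⁻¹.mulVec x) (R⁻¹.mulVec x)
  rw [hWy, hΘy] at hembx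
  have hyy : (W * R⁻¹).mulVec x ⬝ᵥ (W * R⁻¹).mulVec x
      = vecNorm2 ((W * R⁻¹).mulVec x) * vecNorm2 ((W * R⁻¹).mulVec x) := by
    rw [← sq_enorm]; ring
  have hzz : (Θ * W * R⁻¹).mulVec x ⬝ᵥ (Θ * W * R⁻¹).mulVec x
      = vecNorm2 ((Θ * W * R⁻¹).mulVec x) * vecNorm2 ((Θ * W * R⁻¹).mulVec x) := by
    rw [← sq_enorm]; ring
  rw [hyy, hzz] at hembx
  exact scalar_transfer hε (enorm_nonneg' _) (enorm_nonneg' _) (by linarith) hlo hhi hembx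

end Pointwise


/-- Singular value bounds on W R⁻¹ via the approximate orthonormality of its sketch. -/
theorem singular_values_WRinv_bounds {n m k : ℕ} (hm : 0 < m)
    (W : Matrix (Fin n) (Fin m) ℝ) (R : Matrix (Fin m) (Fin m) ℝ) (hR : IsUnit R)
    (Θ : Matrix (Fin k) (Fin n) ℝ) (S : Matrix (Fin k) (Fin m) ℝ)
    (ε F₁ Δ : ℝ) (hε : ε < 1)
    (hemb : ∀ a b : Fin m → ℝ,
      |(W.mulVec a) ⬝ᵥ (W.mulVec b) - (Θ.mulVec (W.mulVec a)) ⬝ᵥ (Θ.mulVec (W.mulVec b))|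
        ≤ ε * vecNorm2 (W.mulVec a) * vecNorm2 (W.mulVec b))
    (hF : frob (Θ * W * R⁻¹ - S) ≤ F₁) (hΔ : frob (1 - Sᵀ * S) ≤ Δ) :
    (Real.sqrt (1 + ε))⁻¹ * (1 - Δ - F₁) ≤ smin (W * R⁻¹) ∧
      smin (W * R⁻¹) ≤ smax (W * R⁻¹) ∧
      smax (W * R⁻¹) ≤ (Real.sqrt (1 - ε))⁻¹ * (1 + Δ + F₁) := by
  have key := pointwise_bounds W R Θ S ε F₁ Δ hε hemb hF hΔ
  set T : Set ℝ := (fun x => vecNorm2 ((W * R⁻¹).mulVec x)) '' {x | vecNorm2 x = 1} with hT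
  have hmemT : ∀ c ∈ T, (Real.sqrt (1 + ε))⁻¹ * (1 - Δ - F₁) ≤ c ∧
      c ≤ (Real.sqrt (1 - ε))⁻¹ * (1 + Δ + F₁) := by
    rintro c ⟨x, hx, rfl⟩
    exact key x hx
  have hne : T.Nonempty := by
    refine ⟨vecNorm2 ((W * R⁻¹).mulVec (Pi.single ⟨0, hm⟩ 1)), ⟨Pi.single ⟨0, hm⟩ 1, ?_, rfl⟩⟩
    show vecNorm2 _ = 1
    have : (Pi.single (⟨0, hm⟩ : Fin m) (1:ℝ)) ⬝ᵥ (Pi.single ⟨0, hm⟩ 1) = 1 := by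
      simp [dotProduct, Pi.single_apply]
    rw [vecNorm2, this, Real.sqrt_one]
  have hbddA : BddAbove T := ⟨(Real.sqrt (1 - ε))⁻¹ * (1 + Δ + F₁), fun c hc => (hmemT c hc).2⟩
  have hbddB : BddBelow T := ⟨(Real.sqrt (1 + ε))⁻¹ * (1 - Δ - F₁), fun c hc => (hmemT c hc).1⟩
  obtain ⟨c, hcT⟩ := hne
  refine ⟨le_csInf ⟨c, hcT⟩ (fun b hb => (hmemT b hb).1), ?_, csSup_le ⟨c, hcT⟩ (fun b hb => (hmemT b hb).2)⟩
  exact le_trans (csInf_le hbddB hcT) (le_csSup hbddA hcT)
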